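/- Let E be a real inner product space, D a finite set with |D| = N, and f_n : E → ℝ differentiable for n ∈ D with global loss F(w) = (1/N)·∑_{n∈D} f_n(w). Assume F is μ-strongly convex and L-smooth with 0 < μ ≤ L, the sample-gradient bound ‖∇f_n(w)‖² ≤ ξ1 + ξ2·‖∇F(w)‖² holds for all n ∈ D and w ∈ E (ξ1 ≥ 0, ξ2 > 0), and w* is a global minimizer of F. Let S be a positive integer with S < N and 0 < ξ2 < S/(N − S), and set ρ̂1 = 1 − μ/L + μξ2·(N−S)/(L·S) and ρ̂2 = ξ1·(N−S)/(2·L·S). For each round t = 1, …, T let S_t ⊆ D with |S_t| = S and update w_{t+1} = w_t − (1/L)·(1/S)·∑_{n∈S_t} ∇f_n(w_t). Then F(w_{T+1}) − F(w*) ≤ ρ̂1^T·(F(w_1) − F(w*)) + ρ̂2·(1 − ρ̂1^T)/(1 − ρ̂1). -/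

import Mathlib

local notation "⟪" x ", " y "⟫" => @inner ℝ _ _ x y

set_option maxHeartbeats 1000000 in
/-- Centralized learning branch of Theorem 2: optimality gap `ψ_T^{CL}` after `T`
rounds of gradient descent using `S` randomly selected samples per round. -/
theorem semifl_cl_optimality_gap
    {E : Type*} [NormedAddCommGroup E] [InnerProductSpace ℝ E] [CompleteSpace E]
    {ι : Type*} (D : Finset ι) (N : ℕ) (hN : D.card = N)
    (f : ι → E → ℝ) (hf : ∀ n ∈ D, Differentiable ℝ (f n))
    (F : E → ℝ) (hF : ∀ w : E, F w = (1 / (N : ℝ)) * ∑ n ∈ D, f n w)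
    (μ L : ℝ) (hμ : 0 < μ) (hμL : μ ≤ L)
    (hsc : ∀ w w' : E,
      F w ≥ F w' + ⟪w - w', gradient F w'⟫ + μ / 2 * ‖w - w'‖ ^ 2)
    (hsm : ∀ w w' : E,
      F w ≤ F w' + ⟪w - w', gradient F w'⟫ + L / 2 * ‖w - w'‖ ^ 2)
    (ξ1 ξ2 : ℝ) (hξ1 : 0 ≤ ξ1) (hξ2pos : 0 < ξ2)
    (hgradbound : ∀ n ∈ D, ∀ w : E,
      ‖gradient (f n) w‖ ^ 2 ≤ ξ1 + ξ2 * ‖gradient F w‖ ^ 2)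
    (wstar : E) (hmin : ∀ w : E, F wstar ≤ F w)
    (S : ℕ) (hS : 0 < S) (hSN : S < N)
    (hξ2 : ξ2 < (S : ℝ) / ((N : ℝ) - S))
    (ρ1hat ρ2hat : ℝ)
    (hρ1 : ρ1hat = 1 - μ / L + μ * ξ2 * ((N : ℝ) - S) / (L * S))
    (hρ2 : ρ2hat = ξ1 * ((N : ℝ) - S) / (2 * L * S))
    (T : ℕ) (hT : 1 ≤ T)
    (St : ℕ → Finset ι)
    (hStD : ∀ t : ℕ, 1 ≤ t → t ≤ T → St t ⊆ D)
    (hSt : ∀ t : ℕ, 1 ≤ t → t ≤ T → (St t).card = S)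
    (w : ℕ → E)
    (hupd : ∀ t : ℕ, 1 ≤ t → t ≤ T →
      w (t + 1) = w t - (1 / L) • ((1 / (S : ℝ)) • ∑ n ∈ St t, gradient (f n) (w t))) :
    F (w (T + 1)) - F wstar ≤
      ρ1hat ^ T * (F (w 1) - F wstar) + ρ2hat * (1 - ρ1hat ^ T) / (1 - ρ1hat) := by
  have hL : 0 < L := lt_of_lt_of_le hμ hμL
  have hSr : (0:ℝ) < (S:ℝ) := by exact_mod_cast hS
  have hNSr : (S:ℝ) < (N:ℝ) := by exact_mod_cast hSN
  have hNr : (0:ℝ) < (N:ℝ) := hSr.trans hNSr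
  have hNSpos : (0:ℝ) < (N:ℝ) - S := by linarith
  -- ξ2 * (N - S) < S
  classical
  have hc : ξ2 * ((N:ℝ) - S) < (S:ℝ) := by
    calc ξ2 * ((N:ℝ) - S) < (S:ℝ) / ((N:ℝ) - S) * ((N:ℝ) - S) := by
          exact mul_lt_mul_of_pos_right hξ2 hNSpos
      _ = (S:ℝ) := by field_simp
  -- gradient of F
  have hgF : ∀ x : E, gradient F x = (N:ℝ)⁻¹ • ∑ n ∈ D, gradient (f n) x := by
    intro x
    refine HasGradientAt.gradient ?_
    rw [hasGradientAt_iff_hasFDerivAt]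
    have h2 : HasFDerivAt (fun w => ∑ n ∈ D, f n w)
        (∑ n ∈ D, InnerProductSpace.toDual ℝ E (gradient (f n) x)) x :=
      HasFDerivAt.fun_sum fun n hn => ((hf n hn).differentiableAt.hasGradientAt).hasFDerivAt
    have h3 := h2.const_smul ((N:ℝ)⁻¹)
    have hFe : F = fun w => (N:ℝ)⁻¹ • ∑ n ∈ D, f n w := by
      funext y; rw [hF y]; simp [smul_eq_mul, one_div]
    rw [hFe, map_smul, map_sum]
    exact h3
  -- PL inequality
  have hPL : ∀ x : E, 2*μ*(F x - F wstar) ≤ ‖gradient F x‖^2 := by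
    intro x
    have h := hsc wstar x
    have hcs : -(‖wstar - x‖ * ‖gradient F x‖) ≤ ⟪wstar - x, gradient F x⟫ :=
      (abs_le.mp (abs_real_inner_le_norm (wstar - x) (gradient F x))).1
    nlinarith [sq_nonneg (μ*‖wstar - x‖ - ‖gradient F x‖), hμ, norm_nonneg (wstar - x),
      norm_nonneg (gradient F x)]
  -- per-step contraction
  have hstep : ∀ t : ℕ, 1 ≤ t → t ≤ T →
      F (w (t+1)) - F wstar ≤ ρ1hat * (F (w t) - F wstar) + ρ2hat := by
    intro t ht1 ht2
    set x := w t with hx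
    set G := gradient F x with hG
    set A := ∑ n ∈ St t, gradient (f n) x with hA
    set B := ∑ n ∈ D \ St t, gradient (f n) x with hB
    set g := (1/(S:ℝ)) • A with hgdef
    have hy : w (t+1) = x - (1/L) • g := hupd t ht1 ht2
    have hsub : St t ⊆ D := hStD t ht1 ht2
    have hcard : (St t).card = S := hSt t ht1 ht2
    -- smoothness step
    have hsm' := hsm (x - (1/L) • g) x
    have e0 : x - (1/L) • g - x = -((1/L) • g) := by abel
    rw [e0] at hsm'
    have e1 : ⟪-((1/L) • g), G⟫ = -((1/L) * ⟪g, G⟫) := by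
      rw [inner_neg_left, real_inner_smul_left]
    have e2 : ‖-((1/L) • g)‖ = (1/L) * ‖g‖ := by
      rw [norm_neg, norm_smul, Real.norm_eq_abs, abs_of_pos (by positivity)]
    rw [e1, e2] at hsm'
    have hid : ‖g - G‖^2 = ‖g‖^2 - 2*⟪g, G⟫ + ‖G‖^2 := by
      rw [@norm_sub_sq_real]
    have hA1 : F (w (t+1)) ≤ F x + (1/(2*L)) * (‖g - G‖^2 - ‖G‖^2) := by
      rw [hy]
      have e3 : L/2 * ((1/L) * ‖g‖)^2 = (1/(2*L)) * ‖g‖^2 := by field_simp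
      have e4 : (1/(2*L)) * (‖g - G‖^2 - ‖G‖^2)
          = (1/(2*L)) * ‖g‖^2 - (1/L) * ⟪g, G⟫ := by
        rw [hid]; field_simp <;> ring
      linarith [hsm', e3.le, e3.ge]
    -- bound ‖g - G‖²
    have hM0 : 0 ≤ ξ1 + ξ2*‖G‖^2 := by positivity
    set M := Real.sqrt (ξ1 + ξ2*‖G‖^2) with hMdef
    have hMsq : M^2 = ξ1 + ξ2*‖G‖^2 := Real.sq_sqrt hM0
    have hMnn : 0 ≤ M := Real.sqrt_nonneg _
    have hbn : ∀ n ∈ D, ‖gradient (f n) x‖ ≤ M := by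
      intro n hn
      have h1 := hgradbound n hn x
      rw [← hG, ← hMsq] at h1
      exact (pow_le_pow_iff_left₀ (norm_nonneg _) hMnn (by norm_num)).mp h1
    have hAn : ‖A‖ ≤ (S:ℝ) * M := by
      calc ‖A‖ ≤ ∑ n ∈ St t, ‖gradient (f n) x‖ := norm_sum_le _ _
        _ ≤ ∑ _n ∈ St t, M := Finset.sum_le_sum (fun n hn => hbn n (hsub hn))
        _ = (S:ℝ) * M := by rw [Finset.sum_const, hcard, nsmul_eq_mul]
    have hBn : ‖B‖ ≤ ((N:ℝ) - S) * M := by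
      have hcard2 : (D \ St t).card = N - S := by
        rw [Finset.card_sdiff_of_subset hsub, hN, hcard]
      calc ‖B‖ ≤ ∑ n ∈ D \ St t, ‖gradient (f n) x‖ := norm_sum_le _ _
        _ ≤ ∑ _n ∈ D \ St t, M := Finset.sum_le_sum
            (fun n hn => hbn n (Finset.mem_sdiff.mp hn).1)
        _ = ((N:ℝ) - S) * M := by
            rw [Finset.sum_const, hcard2, nsmul_eq_mul, Nat.cast_sub hSN.le]
    have hGeq : G = (N:ℝ)⁻¹ • (B + A) := by
      rw [hG, hgF x, hB, hA, Finset.sum_sdiff hsub]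
    have hdec : g - G = ((S:ℝ)⁻¹ - (N:ℝ)⁻¹) • A - (N:ℝ)⁻¹ • B := by
      rw [hgdef, hGeq, one_div]; module
    have hcoef : (0:ℝ) ≤ (S:ℝ)⁻¹ - (N:ℝ)⁻¹ := by
      have : (N:ℝ)⁻¹ ≤ (S:ℝ)⁻¹ := by
        apply inv_anti₀ hSr hNSr.le
      linarith
    have hnorm : ‖g - G‖ ≤ (2*((N:ℝ) - S)/N) * M := by
      calc ‖g - G‖ ≤ ‖((S:ℝ)⁻¹ - (N:ℝ)⁻¹) • A‖ + ‖(N:ℝ)⁻¹ • B‖ := by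
            rw [hdec]; exact norm_sub_le _ _
        _ = ((S:ℝ)⁻¹ - (N:ℝ)⁻¹) * ‖A‖ + (N:ℝ)⁻¹ * ‖B‖ := by
            rw [norm_smul, norm_smul, Real.norm_eq_abs, Real.norm_eq_abs,
              abs_of_nonneg hcoef, abs_of_nonneg (by positivity)]
        _ ≤ ((S:ℝ)⁻¹ - (N:ℝ)⁻¹) * ((S:ℝ) * M) + (N:ℝ)⁻¹ * (((N:ℝ) - S) * M) := by
            gcongr
        _ = (2*((N:ℝ) - S)/N) * M := by field_simp; ring
    have hsq : ‖g - G‖^2 ≤ (((N:ℝ) - S)/S) * (ξ1 + ξ2*‖G‖^2) := by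
      have h2 : ‖g - G‖^2 ≤ ((2*((N:ℝ) - S)/N) * M)^2 :=
        pow_le_pow_left₀ (norm_nonneg _) hnorm 2
      have key : (2*((N:ℝ) - S)/N)^2 ≤ ((N:ℝ) - S)/S := by
        rw [div_pow, div_le_div_iff₀ (by positivity) hSr]
        nlinarith [sq_nonneg ((N:ℝ) - 2*S), hNSpos.le]
      calc ‖g - G‖^2 ≤ (2*((N:ℝ) - S)/N)^2 * M^2 := by rw [mul_pow] at h2; exact h2
        _ ≤ (((N:ℝ) - S)/S) * M^2 := mul_le_mul_of_nonneg_right key (sq_nonneg M)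
        _ = (((N:ℝ) - S)/S) * (ξ1 + ξ2*‖G‖^2) := by rw [hMsq]
    -- combine
    have hB1 : F (w (t+1)) ≤ F x + (1/(2*L)) * ((((N:ℝ) - S)/S) * (ξ1 + ξ2*‖G‖^2) - ‖G‖^2) := by
      have := mul_le_mul_of_nonneg_left hsq (le_of_lt (by positivity : (0:ℝ) < 1/(2*L)))
      nlinarith [hA1]
    have hkey : F (w (t+1)) ≤ F x + ρ2hat + ((ρ1hat - 1)/(2*μ)) * ‖G‖^2 := by
      have e : (1/(2*L)) * ((((N:ℝ) - S)/S) * (ξ1 + ξ2*‖G‖^2) - ‖G‖^2)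
          = ρ2hat + ((ρ1hat - 1)/(2*μ)) * ‖G‖^2 := by
        rw [hρ1, hρ2]; field_simp; ring
      linarith [hB1, e.le, e.ge]
    have hcneg : (ρ1hat - 1)/(2*μ) ≤ 0 := by
      have hlt : ρ1hat < 1 := by
        rw [hρ1]
        have : μ*ξ2*((N:ℝ) - S)/(L*S) < μ/L := by
          rw [div_lt_div_iff₀ (by positivity) hL]
          nlinarith [mul_pos hμ hL]
        linarith
      apply div_nonpos_of_nonpos_of_nonneg <;> linarith
    have hp := hPL x
    have hprod := mul_le_mul_of_nonpos_left hp hcneg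
    have e2 : ((ρ1hat - 1)/(2*μ)) * (2*μ*(F x - F wstar)) = (ρ1hat - 1) * (F x - F wstar) := by
      field_simp
    rw [← hG] at hprod
    linarith [hkey, hprod, e2.le, e2.ge]
  -- nonnegativity of ρ1hat
  have hρ1nn : 0 ≤ ρ1hat := by
    rw [hρ1]
    have h1 : μ / L ≤ 1 := (div_le_one hL).mpr hμL
    have h2 : 0 ≤ μ * ξ2 * ((N:ℝ) - S) / (L * S) := by
      apply div_nonneg (by nlinarith [mul_pos (mul_pos hμ hξ2pos) hNSpos]) (by positivity)
    linarith
  have hρ1lt : ρ1hat < 1 := by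
    rw [hρ1]
    have : μ*ξ2*((N:ℝ) - S)/(L*S) < μ/L := by
      rw [div_lt_div_iff₀ (by positivity) hL]
      nlinarith [mul_pos hμ hL]
    linarith
  -- induction
  have hrec : ∀ k : ℕ, k ≤ T → F (w (k+1)) - F wstar ≤
      ρ1hat ^ k * (F (w 1) - F wstar) + ρ2hat * ∑ i ∈ Finset.range k, ρ1hat ^ i := by
    intro k
    induction k with
    | zero => intro _; simp
    | succ k ih =>
      intro hk1
      have h1 := ih (Nat.le_of_succ_le hk1)
      have h2 := hstep (k+1) (Nat.le_add_left 1 k) hk1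
      have h3 := mul_le_mul_of_nonneg_left h1 hρ1nn
      have e : ρ1hat ^ (k+1) * (F (w 1) - F wstar) + ρ2hat * ∑ i ∈ Finset.range (k+1), ρ1hat ^ i
          = ρ1hat * (ρ1hat ^ k * (F (w 1) - F wstar)
              + ρ2hat * ∑ i ∈ Finset.range k, ρ1hat ^ i) + ρ2hat := by
        rw [geom_sum_succ]; ring
      linarith
  have hfin := hrec T le_rfl
  have hne : ρ1hat - 1 ≠ 0 := by linarith
  have hne2 : 1 - ρ1hat ≠ 0 := by linarith
  rw [geom_sum_eq (by intro h; rw [h] at hρ1lt; linarith) T] at hfin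
  have e : ρ2hat * ((ρ1hat ^ T - 1)/(ρ1hat - 1)) = ρ2hat * (1 - ρ1hat ^ T) / (1 - ρ1hat) := by
    field_simp
    ring
  linarith [e.le, e.ge]
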